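/- Let T be the maximal-label functional subgraph of the de Bruijn graph of span n (rooted at the maximum vertex m). If C is a directed cycle contained in T, then the length |C| divides n+1, and moreover for every vertex u on C, the word u·γ(u) equals l(C) repeated (n+1)/|C| times, where γ(u) is the label of the T-arc leaving u. -/
import Mathlib


/-- Cycles of the maximal-label functional subgraph `T` of the de Bruijn graph of span `n`.
Let `C` be a directed cycle in `T`, given by the periodic vertex sequence `v` with exact
period `p = |C|` (the vertices of one period are pairwise distinct), where the arc leaving
each vertex `u` is the outgoing arc of maximal label `γ u`. Then `|C|` divides `n + 1`,
and for every vertex `u = v i` of the cycle, the word `u ++ [γ u]` equals the label of `C`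
(read around the cycle starting after `u`) repeated `(n+1)/|C|` times. -/
theorem cycle_in_T_divides {A : Type*} [LinearOrder A] (n p : ℕ)
    (L : Set (List A)) (γ : List A → A) (v : ℕ → List A)
    (hlen : ∀ i, (v i).length = n)
    (hrot : ∀ (a : A) (w' : List A), (a :: w') ∈ L → (w' ++ [a]) ∈ L)
    (hmax : ∀ i, ∀ b : A, (v i) ++ [b] ∈ L → b ≤ γ (v i))
    (hstep : ∀ i, (v i) ++ [γ (v i)] ∈ L ∧ v (i + 1) = (v i).tail ++ [γ (v i)])
    (hp : 0 < p)
    (hper : ∀ i, v (i + p) = v i)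
    (hinj : ∀ i j, i < p → j < p → v i = v j → i = j) :
    p ∣ (n + 1) ∧
    ∀ i, v i ++ [γ (v i)] =
      (List.replicate ((n + 1) / p)
        ((List.range p).map fun j => γ (v (i + 1 + j)))).flatten := by
  classical
  set c : ℕ → A := fun i => γ (v i) with hcdef
  -- periodicity of v and c by multiples of p
  have hvper : ∀ k i, v (i + k * p) = v i := by
    intro k
    induction k with
    | zero => simp
    | succ k ih =>
      intro i
      have h : i + (k + 1) * p = (i + k * p) + p := by ring
      rw [h, hper, ih]
  have hcper : ∀ i, c (i + p) = c i := fun i => by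
    simp only [hcdef, hper]
  have hcperk : ∀ k i, c (i + k * p) = c i := fun k i => by
    simp only [hcdef, hvper]
  -- the walk relation
  have hwalk : ∀ i k, k ≤ n →
      v (i + k) = (v i).drop k ++ (List.range k).map (fun j => c (i + j)) := by
    intro i k
    induction k with
    | zero => simp
    | succ k ih =>
      intro hk
      have h1 := ih (Nat.le_of_succ_le hk)
      have h2 := (hstep (i + k)).2
      have hne : (v i).drop k ≠ [] := by
        intro h
        have := congrArg List.length h
        simp [hlen] at this
        omega
      calc v (i + (k + 1)) = v ((i + k) + 1) := by ring_nf
        _ = (v (i + k)).tail ++ [c (i + k)] := h2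
        _ = ((v i).drop k ++ (List.range k).map (fun j => c (i + j))).tail
              ++ [c (i + k)] := by rw [h1]
        _ = ((v i).drop k).tail ++ (List.range k).map (fun j => c (i + j))
              ++ [c (i + k)] := by rw [List.tail_append_of_ne_nil hne]
        _ = (v i).drop (k + 1) ++ (List.range (k + 1)).map (fun j => c (i + j)) := by
              rw [List.tail_drop, List.range_succ, List.map_append, List.append_assoc]
              rfl
  have hB : ∀ i, v (i + n) = (List.range n).map (fun j => c (i + j)) := by
    intro i
    have := hwalk i n le_rfl
    rwa [List.drop_eq_nil_of_le (by rw [hlen]), List.nil_append] at this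
  -- label monotonicity across n+1 steps
  have hmono : ∀ i, c i ≤ c (i + (n + 1)) := by
    intro i
    have h1 : v (i + n) ++ [c (i + n)] ∈ L := (hstep (i + n)).1
    rw [hB i] at h1
    have e1 : (List.range n).map (fun j => c (i + j)) ++ [c (i + n)]
        = (List.range (n + 1)).map (fun j => c (i + j)) := by
      rw [List.range_succ, List.map_append]
      rfl
    have e2 : (List.range (n + 1)).map (fun j => c (i + j))
        = c i :: (List.range n).map (fun j => c (i + 1 + j)) := by
      rw [List.range_succ_eq_map, List.map_cons, List.map_map]
      refine congrArg₂ _ rfl (List.map_congr_left fun a _ => ?_)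
      exact congrArg c (by omega)
    rw [e1, e2] at h1
    have h3 : (List.range n).map (fun j => c (i + 1 + j)) ++ [c i] ∈ L := hrot _ _ h1
    rw [← hB (i + 1)] at h3
    have h4 := hmax (i + 1 + n) (c i) h3
    have : γ (v (i + 1 + n)) = c (i + (n + 1)) := congrArg c (by omega)
    rwa [this] at h4
  -- labels are (n+1)-periodic
  have hup : ∀ k i, c i ≤ c (i + k * (n + 1)) := by
    intro k
    induction k with
    | zero => simp
    | succ k ih =>
      intro i
      have h := hmono (i + k * (n + 1))
      have e : i + k * (n + 1) + (n + 1) = i + (k + 1) * (n + 1) := by ring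
      rw [e] at h
      exact le_trans (ih i) h
  have hcn1 : ∀ i, c (i + (n + 1)) = c i := by
    intro i
    obtain ⟨p', hp'⟩ : ∃ p', p = p' + 1 := ⟨p - 1, by omega⟩
    have h1 : c (i + (n + 1)) ≤ c (i + (n + 1) + p' * (n + 1)) := hup p' _
    have e : i + (n + 1) + p' * (n + 1) = i + (n + 1) * p := by rw [hp']; ring
    rw [e, hcperk (n + 1) i] at h1
    exact le_antisymm h1 (hmono i)
  -- r := (n+1) % p is a period of c
  set r := (n + 1) % p with hrdef
  have hqr : p * ((n + 1) / p) + r = n + 1 := Nat.div_add_mod _ _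
  have hrlt : r < p := Nat.mod_lt _ hp
  have hcr : ∀ i, c (i + r) = c i := by
    intro i
    have h1 : c ((i + r) + ((n + 1) / p) * p) = c (i + r) := hcperk _ _
    have e : (i + r) + ((n + 1) / p) * p = i + (n + 1) := by rw [mul_comm]; omega
    rw [e, hcn1 i] at h1
    exact h1.symm
  -- r is a period of v, hence r = 0, hence p ∣ n+1
  have hvr : ∀ i, v (i + r) = v i := by
    intro i
    have hnp : n ≤ n * p := Nat.le_mul_of_pos_right n hp
    set j := i + n * p - n with hjdef
    have hj : j + n = i + n * p := by omega
    have h1 : v ((i + r) + n * p) = v (i + r) := hvper n _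
    have e1 : (i + r) + n * p = (j + r) + n := by omega
    rw [e1] at h1
    have h2 : v ((j + r) + n) = v (j + n) := by
      rw [hB (j + r), hB j]
      refine List.map_congr_left fun a _ => ?_
      have : j + r + a = (j + a) + r := by omega
      rw [this, hcr]
    have h3 : v (j + n) = v i := by
      rw [hj, hvper n i]
    rw [h2, h3] at h1
    exact h1.symm
  have hr0 : r = 0 := by
    by_contra hr
    have h := hvr 0
    rw [Nat.zero_add] at h
    have := hinj r 0 hrlt hp h
    exact hr this
  have hdvd : p ∣ (n + 1) := Nat.dvd_of_mod_eq_zero hr0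
  have hq : p * ((n + 1) / p) = n + 1 := Nat.mul_div_cancel' hdvd
  refine ⟨hdvd, fun i => ?_⟩
  -- now the word identity
  have key : v i ++ [c i] =
      (List.replicate ((n + 1) / p)
        ((List.range p).map fun j => c (i + 1 + j))).flatten := by
    set f : ℕ → A := fun j => c (i + 1 + j) with hfdef
    have hf : ∀ x, f (p + x) = f x := by
      intro x
      have e : i + 1 + (p + x) = (i + 1 + x) + p := by omega
      simp only [hfdef]
      rw [e, hcper]
    have hrep : ∀ m, (List.range (p * m)).map f
        = (List.replicate m ((List.range p).map f)).flatten := by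
      intro m
      induction m with
      | zero => simp
      | succ m ih =>
        have e : p * (m + 1) = p + p * m := by ring
        rw [e, List.range_add, List.map_append, List.map_map,
          List.replicate_succ, List.flatten_cons]
        refine congrArg₂ _ rfl ?_
        rw [← ih]
        exact List.map_congr_left fun a _ => hf a
    have hvi : v i = (List.range n).map f := by
      have h1 : v (i + ((n + 1) / p) * p) = v i := hvper _ i
      have e : i + ((n + 1) / p) * p = (i + 1) + n := by rw [mul_comm]; omega
      rw [e] at h1
      rw [← h1, hB (i + 1)]
    have hci : c i = f n := by
      simp only [hfdef]
      have e : i + 1 + n = i + (n + 1) := by omega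
      rw [e, hcn1]
    have hrep' := hrep ((n + 1) / p)
    rw [hq] at hrep'
    rw [hvi, hci, show (List.range n).map f ++ [f n]
        = (List.range (n + 1)).map f by rw [List.range_succ, List.map_append]; rfl,
      hrep']
  exact key
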